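/- Suppose q_ε : [0,∞) → ℝ is continuous, q_ε ≥ 0, v_ε solves v_ε'' + λ v_ε + q_ε v_ε' = n_ε with zero initial data v_ε(0) = v_ε'(0) = 0, λ > 0, and ∫₀^∞ |n_ε(τ)|² dτ ≤ c_ℓ ε^ℓ for every ℓ ∈ ℕ (n_ε is negligible in L²). Then for every T > 0 and every ℓ ∈ ℕ there is C > 0 such that sup_{t∈[0,T]} (λ|v_ε(t)|² + |v_ε'(t)|²) ≤ C ε^ℓ; i.e., (v_ε) is a negligible net uniformly on compact time intervals. -/

import Mathlib

open Set MeasureTheory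

/-- Real inner product on `ℂ`, as an abbreviation. -/
noncomputable def negSrc.ip (x y : ℂ) : ℝ := inner ℝ x y

lemma negSrc.ip_self (x : ℂ) : negSrc.ip x x = ‖x‖ ^ 2 := real_inner_self_eq_norm_sq x

/-- A solution with zero initial data and negligible right-hand side is itself a
negligible net, uniformly on compact time intervals. -/
theorem negligible_source_negligible_solution
    (lam : ℝ) (hlam : 0 < lam)
    (q : ℝ → ℝ → ℝ) (v : ℝ → ℝ → ℂ) (n : ℝ → ℝ → ℂ)
    (hqcont : ∀ ε ∈ Ioc (0:ℝ) 1, Continuous (q ε))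
    (hqnn : ∀ ε ∈ Ioc (0:ℝ) 1, ∀ t ≥ (0:ℝ), 0 ≤ q ε t)
    (hvsmooth : ∀ ε ∈ Ioc (0:ℝ) 1, ContDiff ℝ 2 (v ε))
    (heq : ∀ ε ∈ Ioc (0:ℝ) 1, ∀ t ≥ (0:ℝ),
      deriv (deriv (v ε)) t + (lam : ℂ) * v ε t + (q ε t : ℂ) * deriv (v ε) t = n ε t)
    (hdata : ∀ ε ∈ Ioc (0:ℝ) 1, v ε 0 = 0 ∧ deriv (v ε) 0 = 0)
    (hnint : ∀ ε ∈ Ioc (0:ℝ) 1, IntegrableOn (fun τ => ‖n ε τ‖ ^ 2) (Ioi 0))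
    (hneg : ∀ ℓ : ℕ, ∃ c > (0:ℝ), ∀ ε ∈ Ioc (0:ℝ) 1,
      ∫ τ in Ioi (0:ℝ), ‖n ε τ‖ ^ 2 ≤ c * ε ^ ℓ) :
    ∀ T > (0:ℝ), ∀ ℓ : ℕ, ∃ C > (0:ℝ), ∀ ε ∈ Ioc (0:ℝ) 1, ∀ t ∈ Icc (0:ℝ) T,
      lam * ‖v ε t‖ ^ 2 + ‖deriv (v ε) t‖ ^ 2 ≤ C * ε ^ ℓ := by
  intro T hT ℓ
  obtain ⟨c, hc, hcb⟩ := hneg ℓ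
  refine ⟨Real.exp T * c, by positivity, ?_⟩
  intro ε hε t ht
  have hv := hvsmooth ε hε
  set V := v ε with hV
  have hdiffV : Differentiable ℝ V := hv.differentiable (by norm_num)
  have h1 : ContDiff ℝ 1 (deriv V) := by
    have := (contDiff_succ_iff_deriv (n := 1)).mp (by exact_mod_cast hv)
    exact this.2.2
  have hdiffV' : Differentiable ℝ (deriv V) := h1.differentiable (by norm_num)
  have hcontV'' : Continuous (deriv (deriv V)) := (contDiff_one_iff_deriv.mp h1).2
  set E : ℝ → ℝ := fun s => lam * negSrc.ip (V s) (V s)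
      + negSrc.ip (deriv V s) (deriv V s) with hEdef
  set m : ℝ → ℝ := fun s =>
      ‖deriv (deriv V) s + (lam : ℂ) * V s + (q ε s : ℂ) * deriv V s‖ ^ 2 with hmdef
  have hmcont : Continuous m := by
    apply Continuous.pow
    apply Continuous.norm
    exact (hcontV''.add (continuous_const.mul hdiffV.continuous)).add
      ((Complex.continuous_ofReal.comp (hqcont ε hε)).mul hdiffV'.continuous)
  have hmnn : ∀ s, 0 ≤ m s := fun s => by positivity
  have hmeq : ∀ s ≥ (0:ℝ), m s = ‖n ε s‖ ^ 2 := by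
    intro s hs
    simp only [hmdef]
    rw [heq ε hε s hs]
  -- derivative of the energy
  set D : ℝ → ℝ := fun s => lam * (negSrc.ip (V s) (deriv V s) + negSrc.ip (deriv V s) (V s))
      + (negSrc.ip (deriv V s) (deriv (deriv V) s) + negSrc.ip (deriv (deriv V) s) (deriv V s))
      with hDdef
  have hdE : ∀ s, HasDerivAt E (D s) s := by
    intro s
    have h1' : HasDerivAt V (deriv V s) s := (hdiffV s).hasDerivAt
    have h2' : HasDerivAt (deriv V) (deriv (deriv V) s) s := (hdiffV' s).hasDerivAt
    exact ((h1'.inner ℝ h1').const_mul lam).add (h2'.inner ℝ h2')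
  -- the key differential inequality
  have hbound : ∀ s ≥ (0:ℝ), D s ≤ E s + m s := by
    intro s hs
    have hode : deriv (deriv V) s
        = n ε s - (lam:ℂ) * V s - (q ε s : ℂ) * deriv V s := by
      have h := heq ε hε s hs
      rw [← h]; ring
    have e1 : negSrc.ip (deriv (deriv V) s) (deriv V s)
        = negSrc.ip (n ε s) (deriv V s) - lam * negSrc.ip (V s) (deriv V s)
          - q ε s * negSrc.ip (deriv V s) (deriv V s) := by
      rw [hode]
      show (inner ℝ (n ε s - (lam:ℂ) * V s - (q ε s : ℂ) * deriv V s) (deriv V s) : ℝ) = _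
      rw [inner_sub_left, inner_sub_left, ← Complex.real_smul, ← Complex.real_smul,
        real_inner_smul_left, real_inner_smul_left]
      rfl
    have e2 : negSrc.ip (deriv V s) (deriv (deriv V) s)
        = negSrc.ip (deriv (deriv V) s) (deriv V s) := real_inner_comm _ _
    have e3 : negSrc.ip (deriv V s) (V s) = negSrc.ip (V s) (deriv V s) :=
      real_inner_comm _ _
    have hcs : negSrc.ip (n ε s) (deriv V s) ≤ ‖n ε s‖ * ‖deriv V s‖ :=
      real_inner_le_norm _ _
    have hq0 : 0 ≤ q ε s := hqnn ε hε s hs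
    have hms : m s = ‖n ε s‖ ^ 2 := hmeq s hs
    simp only [hDdef, hEdef, e1, e2, e3, negSrc.ip_self, hms]
    nlinarith [sq_nonneg (‖n ε s‖ - ‖deriv V s‖), sq_nonneg (‖V s‖),
      mul_nonneg hq0 (sq_nonneg ‖deriv V s‖), norm_nonneg (n ε s),
      norm_nonneg (deriv V s), hlam.le, sq_nonneg ‖deriv V s‖]
  -- the integrating-factor function Φ
  have hg : Continuous fun u => Real.exp (-u) * m u :=
    (Real.continuous_exp.comp continuous_neg).mul hmcont
  set Φ : ℝ → ℝ := fun s => Real.exp (-s) * E s - ∫ u in (0:ℝ)..s, Real.exp (-u) * m u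
    with hΦdef
  have hΦderiv : ∀ s, HasDerivAt Φ
      ((Real.exp (-s) * (-1)) * E s + Real.exp (-s) * D s - Real.exp (-s) * m s) s := by
    intro s
    have hexp : HasDerivAt (fun u : ℝ => Real.exp (-u)) (Real.exp (-s) * (-1)) s :=
      (hasDerivAt_neg s).exp
    have hint : HasDerivAt (fun u : ℝ => ∫ x in (0:ℝ)..u, Real.exp (-x) * m x)
        (Real.exp (-s) * m s) s := (hg.integral_hasStrictDerivAt 0 s).hasDerivAt
    exact (hexp.mul (hdE s)).sub hint
  have hanti : AntitoneOn Φ (Icc 0 T) := by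
    apply antitoneOn_of_deriv_nonpos (convex_Icc 0 T)
    · exact fun s _ => ((hΦderiv s).continuousAt).continuousWithinAt
    · exact fun s _ => ((hΦderiv s).differentiableAt).differentiableWithinAt
    · intro s hs
      rw [interior_Icc] at hs
      rw [(hΦderiv s).deriv]
      have hb := hbound s hs.1.le
      have he : 0 < Real.exp (-s) := Real.exp_pos _
      nlinarith [hb, he]
  have hΦ0 : Φ 0 = 0 := by
    have hd := hdata ε hε
    have h0 : V 0 = 0 := hd.1
    have h0' : deriv V 0 = 0 := hd.2
    simp [hΦdef, hEdef, h0, h0', negSrc.ip_self]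
  have hΦt : Φ t ≤ 0 := by
    rw [← hΦ0]
    exact hanti (left_mem_Icc.mpr hT.le) ht ht.1
  -- bound the integral by the negligible source
  have hI1 : (∫ u in (0:ℝ)..t, Real.exp (-u) * m u)
      = ∫ u in Ioc (0:ℝ) t, Real.exp (-u) * m u := intervalIntegral.integral_of_le ht.1
  have hintn : IntegrableOn (fun τ => ‖n ε τ‖ ^ 2) (Ioc 0 t) :=
    (hnint ε hε).mono_set Ioc_subset_Ioi_self
  have hI2 : (∫ u in Ioc (0:ℝ) t, Real.exp (-u) * m u)
      ≤ ∫ u in Ioc (0:ℝ) t, ‖n ε u‖ ^ 2 := by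
    apply setIntegral_mono_on (hg.integrableOn_Ioc) hintn measurableSet_Ioc
    intro u hu
    rw [← hmeq u hu.1.le]
    calc Real.exp (-u) * m u ≤ 1 * m u := by
          apply mul_le_mul_of_nonneg_right _ (hmnn u)
          rw [Real.exp_le_one_iff]; linarith [hu.1]
      _ = m u := one_mul _
  have hI3 : (∫ u in Ioc (0:ℝ) t, ‖n ε u‖ ^ 2) ≤ ∫ u in Ioi (0:ℝ), ‖n ε u‖ ^ 2 := by
    apply setIntegral_mono_set (hnint ε hε)
    · exact Filter.Eventually.of_forall fun u => by positivity
    · exact HasSubset.Subset.eventuallyLE Ioc_subset_Ioi_self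
  have hsource : (∫ u in (0:ℝ)..t, Real.exp (-u) * m u) ≤ c * ε ^ ℓ := by
    rw [hI1]
    exact le_trans (le_trans hI2 hI3) (hcb ε hε)
  -- conclude
  have hkey : Real.exp (-t) * E t ≤ c * ε ^ ℓ := by
    have : Real.exp (-t) * E t ≤ ∫ u in (0:ℝ)..t, Real.exp (-u) * m u := by
      have := hΦt; simp only [hΦdef] at this; linarith
    linarith
  have hEt : E t ≤ Real.exp T * (c * ε ^ ℓ) := by
    have h1' : E t = Real.exp t * (Real.exp (-t) * E t) := by
      rw [← mul_assoc, ← Real.exp_add]; simp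
    rw [h1']
    calc Real.exp t * (Real.exp (-t) * E t) ≤ Real.exp t * (c * ε ^ ℓ) :=
          mul_le_mul_of_nonneg_left hkey (Real.exp_pos t).le
      _ ≤ Real.exp T * (c * ε ^ ℓ) := by
          exact mul_le_mul_of_nonneg_right (Real.exp_le_exp.mpr ht.2)
            (mul_nonneg hc.le (pow_nonneg hε.1.le ℓ))
  have hfin : lam * ‖V t‖ ^ 2 + ‖deriv V t‖ ^ 2 = E t := by
    simp [hEdef, negSrc.ip_self]
  rw [mul_assoc]
  calc lam * ‖v ε t‖ ^ 2 + ‖deriv (v ε) t‖ ^ 2 = E t := hfin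
    _ ≤ Real.exp T * (c * ε ^ ℓ) := hEt
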